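/- Let n ≥ 1 and let P and Q be positive semidefinite complex n×n matrices, and let d be a real number with d > 0 and Re(tr P) + Re(tr Q) ≤ d. Then the matrix ρ' indexed by (Fin 2 × Fin n) defined by ρ' = (1/d) · ( E₀₀ ⊗ P + E₁₁ ⊗ Q ) + ((d − Re(tr P) − Re(tr Q)) / (2·n·d)) · I, where I is the identity on (Fin 2 × Fin n), E₀₀ and E₁₁ are the 2×2 matrices with a single 1 in position (0,0) resp. (1,1), and ⊗ is the Kronecker product, is positive semidefinite and has trace 1. -/

import Mathlib

open Matrix Kronecker
open scoped ComplexOrder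

lemma conjTranspose_kron {l m p q : Type*} (A : Matrix l m ℂ) (B : Matrix p q ℂ) :
    (A ⊗ₖ B)ᴴ = Aᴴ ⊗ₖ Bᴴ := by
  ext ⟨i, j⟩ ⟨k, l⟩
  simp [conjTranspose_apply, kroneckerMap_apply, star_mul', mul_comm]

lemma psd_kron {m p : Type*} [Fintype m] [Fintype p] [DecidableEq m] [DecidableEq p]
    {A : Matrix m m ℂ} {B : Matrix p p ℂ}
    (hA : A.PosSemidef) (hB : B.PosSemidef) : (A ⊗ₖ B).PosSemidef := by
  exact hA.kronecker hB

lemma psd_real_smul {m : Type*} [Fintype m] {M : Matrix m m ℂ} (hM : M.PosSemidef)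
    (c : ℝ) (hc : 0 ≤ c) : ((c : ℂ) • M).PosSemidef := by
  constructor
  · unfold Matrix.IsHermitian
    rw [conjTranspose_smul, hM.1]
    congr 1
    simp [Complex.star_def]
  · exact (hM.smul (a := (c : ℂ)) (by exact_mod_cast hc)).2

lemma psd_trace_real {m : Type*} [Fintype m] {M : Matrix m m ℂ} (hM : M.PosSemidef) :
    ((M.trace.re : ℂ)) = M.trace := by
  rw [← Complex.conj_eq_iff_re]
  show star M.trace = M.trace
  rw [← trace_conjTranspose, hM.1]

theorem stmt_1 (n : ℕ) (hn : 1 ≤ n)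
    (P Q : Matrix (Fin n) (Fin n) ℂ)
    (hP : P.PosSemidef) (hQ : Q.PosSemidef)
    (d : ℝ) (hd : 0 < d)
    (htr : P.trace.re + Q.trace.re ≤ d) :
    ((1 / (d : ℂ)) • (Matrix.single (0 : Fin 2) (0 : Fin 2) (1 : ℂ) ⊗ₖ P +
        Matrix.single (1 : Fin 2) (1 : Fin 2) (1 : ℂ) ⊗ₖ Q) +
      (((d - P.trace.re - Q.trace.re) / (2 * n * d) : ℝ) : ℂ) •
        (1 : Matrix (Fin 2 × Fin n) (Fin 2 × Fin n) ℂ)).PosSemidef ∧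
    ((1 / (d : ℂ)) • (Matrix.single (0 : Fin 2) (0 : Fin 2) (1 : ℂ) ⊗ₖ P +
        Matrix.single (1 : Fin 2) (1 : Fin 2) (1 : ℂ) ⊗ₖ Q) +
      (((d - P.trace.re - Q.trace.re) / (2 * n * d) : ℝ) : ℂ) •
        (1 : Matrix (Fin 2 × Fin n) (Fin 2 × Fin n) ℂ)).trace = 1 := by
  have hE0 : (Matrix.single (0 : Fin 2) (0 : Fin 2) (1 : ℂ)).PosSemidef := by
    have : Matrix.single (0 : Fin 2) (0 : Fin 2) (1 : ℂ) =
        (Matrix.single (0 : Fin 2) (0 : Fin 2) (1 : ℂ))ᴴ *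
        (Matrix.single (0 : Fin 2) (0 : Fin 2) (1 : ℂ)) := by
      ext i j; fin_cases i <;> fin_cases j <;>
        simp [Matrix.mul_apply, Matrix.single, Fin.sum_univ_succ]
    rw [this]; exact posSemidef_conjTranspose_mul_self _
  have hE1 : (Matrix.single (1 : Fin 2) (1 : Fin 2) (1 : ℂ)).PosSemidef := by
    have : Matrix.single (1 : Fin 2) (1 : Fin 2) (1 : ℂ) =
        (Matrix.single (1 : Fin 2) (1 : Fin 2) (1 : ℂ))ᴴ *
        (Matrix.single (1 : Fin 2) (1 : Fin 2) (1 : ℂ)) := by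
      ext i j; fin_cases i <;> fin_cases j <;>
        simp [Matrix.mul_apply, Matrix.single, Fin.sum_univ_succ]
    rw [this]; exact posSemidef_conjTranspose_mul_self _
  have hsum : ((Matrix.single (0 : Fin 2) (0 : Fin 2) (1 : ℂ) ⊗ₖ P +
      Matrix.single (1 : Fin 2) (1 : Fin 2) (1 : ℂ) ⊗ₖ Q)).PosSemidef :=
    (psd_kron hE0 hP).add (psd_kron hE1 hQ)
  have hc2 : (0:ℝ) ≤ (d - P.trace.re - Q.trace.re) / (2 * n * d) := by
    apply div_nonneg (by linarith)
    positivity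
  have h1 : ((1 / (d : ℂ)) • (Matrix.single (0 : Fin 2) (0 : Fin 2) (1 : ℂ) ⊗ₖ P +
      Matrix.single (1 : Fin 2) (1 : Fin 2) (1 : ℂ) ⊗ₖ Q)).PosSemidef := by
    have := psd_real_smul hsum (1/d) (by positivity)
    simpa using this
  refine ⟨h1.add (psd_real_smul Matrix.PosSemidef.one _ hc2), ?_⟩
  have hPt := psd_trace_real hP
  have hQt := psd_trace_real hQ
  rw [trace_add, trace_smul, trace_smul, trace_add, trace_kronecker, trace_kronecker,
    Matrix.trace_single_eq_same, Matrix.trace_single_eq_same, trace_one, ← hPt, ← hQt]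
  have hcard : (Fintype.card (Fin 2 × Fin n) : ℂ) = 2 * n := by
    simp [Fintype.card_prod]
  rw [hcard]
  have hd' : (d : ℂ) ≠ 0 := by exact_mod_cast hd.ne'
  have hn' : (n : ℂ) ≠ 0 := by exact_mod_cast (by omega : n ≠ 0)
  simp only [smul_eq_mul, one_mul]
  push_cast
  field_simp
  simp only [Complex.ofReal_re]
  ring
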